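/- There exists ε > 0 such that the ODE w'' + (w/r)' = (5w/(2(1+w²)))(w')² + (w³/(2r²))(3+w²) has at most one C² solution on [0,ε] with initial data w(0) = 0 and w'(0) = a. -/

import Mathlib

open Real Set Filter Topology

set_option maxHeartbeats 1000000

lemma lip4p (x y c : ℝ) (hc0 : 0 ≤ c) (hx : |x| ≤ c) (hy : |y| ≤ c) :
    |x^3*(3+x^2) - y^3*(3+y^2)| ≤ (9*c^2+5*c^4)*|x-y| := by
  have e : x^3*(3+x^2) - y^3*(3+y^2)
      = (x-y)*(3*(x^2+x*y+y^2) + (x^4+x^3*y+x^2*y^2+x*y^3+y^4)) := by ring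
  rw [e, abs_mul, mul_comm]
  apply mul_le_mul_of_nonneg_right _ (abs_nonneg _)
  have hx2 : x^2 ≤ c^2 := by nlinarith [neg_abs_le x, le_abs_self x]
  have hy2 : y^2 ≤ c^2 := by nlinarith [neg_abs_le y, le_abs_self y]
  have haxy : |x*y| ≤ c^2 := by
    rw [abs_mul]
    calc |x| * |y| ≤ c*c := mul_le_mul hx hy (abs_nonneg y) hc0
    _ = c^2 := by ring
  have hxy := abs_le.1 haxy
  have hx4 : x^4 ≤ c^4 := by nlinarith [sq_nonneg x, sq_nonneg c]
  have hy4 : y^4 ≤ c^4 := by nlinarith [sq_nonneg y, sq_nonneg c]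
  have hx2y2 : x^2*y^2 ≤ c^4 := by nlinarith [sq_nonneg x, sq_nonneg y, sq_nonneg c]
  have hx3y : |x^3*y| ≤ c^4 := by
    have h' : |x^3*y| = |x*y| * x^2 := by
      rw [abs_mul, abs_mul, abs_pow, ← sq_abs x]; ring
    rw [h']
    calc |x*y| * x^2 ≤ c^2 * c^2 :=
      mul_le_mul haxy hx2 (sq_nonneg x) (by positivity)
    _ = c^4 := by ring
  have hxy3 : |x*y^3| ≤ c^4 := by
    have h' : |x*y^3| = |x*y| * y^2 := by
      rw [abs_mul, abs_mul, abs_pow, ← sq_abs y]; ring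
    rw [h']
    calc |x*y| * y^2 ≤ c^2 * c^2 :=
      mul_le_mul haxy hy2 (sq_nonneg y) (by positivity)
    _ = c^4 := by ring
  have hx3y' := abs_le.1 hx3y
  have hxy3' := abs_le.1 hxy3
  have hq1 : 0 ≤ x^2+x*y+y^2 := by nlinarith [sq_nonneg (x+y), sq_nonneg x, sq_nonneg y]
  have hq2 : 0 ≤ x^4+x^3*y+x^2*y^2+x*y^3+y^4 := by
    nlinarith [sq_nonneg (x^2+x*y), sq_nonneg (y^2+x*y), sq_nonneg (x^2), sq_nonneg (y^2)]
  have hRHS : (0:ℝ) ≤ 9*c^2+5*c^4 := by positivity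
  rw [abs_le]; constructor
  · linarith
  · linarith [hxy.2, hx3y'.2, hxy3'.2]

lemma lip1p (x y : ℝ) : |5*x/(2*(1+x^2)) - 5*y/(2*(1+y^2))| ≤ 5/2*|x-y| := by
  have hx : (0:ℝ) < 1 + x^2 := by positivity
  have hy : (0:ℝ) < 1 + y^2 := by positivity
  have e : 5*x/(2*(1+x^2)) - 5*y/(2*(1+y^2)) = (5*((x-y)*(1-x*y)))/(2*((1+x^2)*(1+y^2))) := by
    field_simp; ring
  rw [e, abs_div, div_le_iff₀ (by positivity)]
  have h1 : |1 - x*y| ≤ (1+x^2)*(1+y^2) := by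
    rw [abs_le]; constructor <;> nlinarith [sq_nonneg (x-y), sq_nonneg (x+y), sq_nonneg (x*y)]
  have h2 : |2*((1+x^2)*(1+y^2))| = 2*((1+x^2)*(1+y^2)) := abs_of_pos (by positivity)
  rw [h2, abs_mul, abs_mul]
  have h5 : |(5:ℝ)| = 5 := by norm_num
  rw [h5]
  nlinarith [abs_nonneg (x-y), abs_nonneg (1-x*y), mul_le_mul_of_nonneg_left h1 (abs_nonneg (x-y))]

lemma lip2p (y B : ℝ) (hy : |y| ≤ B) : |5*y/(2*(1+y^2))| ≤ 5/2*B := by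
  have hy2 : (0:ℝ) < 1 + y^2 := by positivity
  have h : |5*y/(2*(1+y^2))| = 5*|y|/(2*(1+y^2)) := by
    rw [abs_div, abs_mul]; norm_num [abs_of_pos (show (0:ℝ) < 2*(1+y^2) by positivity)]
  rw [h, div_le_iff₀ (by positivity)]
  nlinarith [abs_nonneg y, sq_nonneg y]

lemma keyboundp (B x y p q s : ℝ) (hB : 1 ≤ B) (hs0 : 0 < s) (hs1 : s ≤ 1)
    (hx : |x| ≤ B*s) (hy : |y| ≤ B*s) (hp : |p| ≤ B) (hq : |q| ≤ B) :
    |5*x/(2*(1+x^2))*p^2 + x^3/(2*s^2)*(3+x^2) - (5*y/(2*(1+y^2))*q^2 + y^3/(2*s^2)*(3+y^2))|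
      ≤ (5*B^2 + (9*B^2+5*B^4)/2) * (|x - y| + |p - q|) := by
  have hB0 : (0:ℝ) < B := by linarith
  have hxx : (0:ℝ) < 1 + x^2 := by positivity
  have hyy : (0:ℝ) < 1 + y^2 := by positivity
  have key : 5*x/(2*(1+x^2))*p^2 + x^3/(2*s^2)*(3+x^2) - (5*y/(2*(1+y^2))*q^2 + y^3/(2*s^2)*(3+y^2))
      = (5*x/(2*(1+x^2)) - 5*y/(2*(1+y^2)))*p^2 + (5*y/(2*(1+y^2)))*(p^2-q^2)
        + (x^3*(3+x^2) - y^3*(3+y^2))/(2*s^2) := by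
    field_simp
    ring
  rw [key]
  have hyB : |y| ≤ B := le_trans hy (by nlinarith)
  have hp2 : p^2 ≤ B^2 := by nlinarith [neg_abs_le p, le_abs_self p]
  have hpq : |p^2 - q^2| ≤ 2*B*|p-q| := by
    have e : p^2 - q^2 = (p+q)*(p-q) := by ring
    rw [e, abs_mul]
    apply mul_le_mul_of_nonneg_right _ (abs_nonneg _)
    calc |p+q| ≤ |p| + |q| := abs_add_le _ _
    _ ≤ 2*B := by linarith
  have t1 : |(5*x/(2*(1+x^2)) - 5*y/(2*(1+y^2)))*p^2| ≤ 5/2*B^2*|x-y| := by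
    rw [abs_mul]
    calc |5*x/(2*(1+x^2)) - 5*y/(2*(1+y^2))| * |p^2|
        ≤ (5/2*|x-y|) * B^2 := by
          apply mul_le_mul (lip1p x y) _ (abs_nonneg _) (by positivity)
          rw [abs_of_nonneg (sq_nonneg p)]; exact hp2
    _ = 5/2*B^2*|x-y| := by ring
  have t2 : |(5*y/(2*(1+y^2)))*(p^2-q^2)| ≤ 5*B^2*|p-q| := by
    rw [abs_mul]
    calc |5*y/(2*(1+y^2))| * |p^2-q^2| ≤ (5/2*B) * (2*B*|p-q|) := by
          apply mul_le_mul (lip2p y B hyB) hpq (abs_nonneg _) (by positivity)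
    _ = 5*B^2*|p-q| := by ring
  have t3 : |(x^3*(3+x^2) - y^3*(3+y^2))/(2*s^2)| ≤ (9*B^2+5*B^4)/2*|x-y| := by
    rw [abs_div, abs_of_pos (show (0:ℝ) < 2*s^2 by positivity), div_le_iff₀ (by positivity)]
    have h4 := lip4p x y (B*s) (by positivity) hx hy
    have hcoef : (9*(B*s)^2+5*(B*s)^4) ≤ (9*B^2+5*B^4)*s^2 := by
      have hss : s^2 ≤ 1 := by nlinarith
      have e1 : (B*s)^2 = B^2*s^2 := by ring
      have e2 : (B*s)^4 = B^4*s^2*s^2 := by ring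
      rw [e1, e2]
      nlinarith [mul_nonneg (mul_nonneg (pow_nonneg hB0.le 4) (sq_nonneg s)) (sq_nonneg s),
        mul_nonneg (pow_nonneg hB0.le 4) (sq_nonneg s)]
    have h5 : (9*(B*s)^2+5*(B*s)^4)*|x-y| ≤ ((9*B^2+5*B^4)*s^2)*|x-y| :=
      mul_le_mul_of_nonneg_right hcoef (abs_nonneg _)
    have e3 : ((9*B^2+5*B^4)*s^2)*|x-y| = (9*B^2+5*B^4)/2*|x-y| * (2*s^2) := by ring
    linarith [e3 ▸ le_trans h4 h5]
  set u := (5*x/(2*(1+x^2)) - 5*y/(2*(1+y^2)))*p^2 with hu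
  set v := (5*y/(2*(1+y^2)))*(p^2-q^2) with hv
  set z := (x^3*(3+x^2) - y^3*(3+y^2))/(2*s^2) with hz
  have habs : |u+v+z| ≤ |u| + |v| + |z| :=
    le_trans (abs_add_le _ _) (by linarith [abs_add_le u v])
  have hfin : |u| + |v| + |z| ≤ (5*B^2 + (9*B^2+5*B^4)/2) * (|x - y| + |p - q|) := by
    nlinarith [abs_nonneg (x-y), abs_nonneg (p-q), sq_nonneg B, pow_nonneg hB0.le 4,
      mul_nonneg (sq_nonneg B) (abs_nonneg (x-y)), mul_nonneg (sq_nonneg B) (abs_nonneg (p-q)),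
      mul_nonneg (pow_nonneg hB0.le 4) (abs_nonneg (p-q))]
  linarith

/-- There exists `ε > 0` such that the ODE
`w'' + (w/r)' = (5w/(2(1+w²)))(w')² + (w³/(2r²))(3+w²)` has at most one C² solution
on `[0,ε]` with initial data `w(0) = 0`, `w'(0) = a`: any two such solutions on
`[0,r₀]` agree on `[0,ε]` for some `ε > 0`. -/
theorem stmt_11 (a r₀ : ℝ) (hr₀ : 0 < r₀) (w₁ w₂ : ℝ → ℝ)
    (h₁ : ContDiffOn ℝ 2 w₁ (Set.Icc 0 r₀))
    (h₂ : ContDiffOn ℝ 2 w₂ (Set.Icc 0 r₀))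
    (ode₁ : ∀ r ∈ Set.Ioo 0 r₀,
      deriv (deriv w₁) r + deriv (fun t => w₁ t / t) r
        = 5 * w₁ r / (2 * (1 + (w₁ r) ^ 2)) * (deriv w₁ r) ^ 2
          + (w₁ r) ^ 3 / (2 * r ^ 2) * (3 + (w₁ r) ^ 2))
    (ode₂ : ∀ r ∈ Set.Ioo 0 r₀,
      deriv (deriv w₂) r + deriv (fun t => w₂ t / t) r
        = 5 * w₂ r / (2 * (1 + (w₂ r) ^ 2)) * (deriv w₂ r) ^ 2
          + (w₂ r) ^ 3 / (2 * r ^ 2) * (3 + (w₂ r) ^ 2))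
    (init₁ : w₁ 0 = 0) (init₂ : w₂ 0 = 0)
    (d₁ : Tendsto (deriv w₁) (𝓝[>] 0) (𝓝 a))
    (d₂ : Tendsto (deriv w₂) (𝓝[>] 0) (𝓝 a)) :
    ∃ ε > 0, ε ≤ r₀ ∧ Set.EqOn w₁ w₂ (Set.Icc 0 ε) := by
  have hIcc : UniqueDiffOn ℝ (Icc (0:ℝ) r₀) := uniqueDiffOn_Icc hr₀
  set g₁ : ℝ → ℝ := derivWithin w₁ (Icc 0 r₀) with hg₁def
  set g₂ : ℝ → ℝ := derivWithin w₂ (Icc 0 r₀) with hg₂def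
  have hg₁c : ContinuousOn g₁ (Icc 0 r₀) :=
    (h₁.derivWithin (m := 1) hIcc (by norm_num)).continuousOn
  have hg₂c : ContinuousOn g₂ (Icc 0 r₀) :=
    (h₂.derivWithin (m := 1) hIcc (by norm_num)).continuousOn
  have hmem : ∀ r ∈ Ioo (0:ℝ) r₀, Icc (0:ℝ) r₀ ∈ 𝓝 r :=
    fun r hr => Icc_mem_nhds hr.1 hr.2
  have heq₁ : ∀ r ∈ Ioo (0:ℝ) r₀, g₁ r = deriv w₁ r :=
    fun r hr => derivWithin_of_mem_nhds (hmem r hr)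
  have heq₂ : ∀ r ∈ Ioo (0:ℝ) r₀, g₂ r = deriv w₂ r :=
    fun r hr => derivWithin_of_mem_nhds (hmem r hr)
  have hd₁ : ∀ r ∈ Icc (0:ℝ) r₀, HasDerivWithinAt w₁ (g₁ r) (Icc 0 r₀) r :=
    fun r hr => ((h₁.differentiableOn (by norm_num)) r hr).hasDerivWithinAt
  have hd₂ : ∀ r ∈ Icc (0:ℝ) r₀, HasDerivWithinAt w₂ (g₂ r) (Icc 0 r₀) r :=
    fun r hr => ((h₂.differentiableOn (by norm_num)) r hr).hasDerivWithinAt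
  -- g_i 0 = a
  have h0mem : (0:ℝ) ∈ Icc (0:ℝ) r₀ := ⟨le_rfl, hr₀.le⟩
  have hIooev : Ioo (0:ℝ) r₀ ∈ 𝓝[>] (0:ℝ) := Ioo_mem_nhdsGT hr₀
  have hglim : ∀ (g : ℝ → ℝ), ContinuousOn g (Icc 0 r₀) →
      Tendsto g (𝓝[>] (0:ℝ)) (𝓝 (g 0)) := by
    intro g hgc
    have h1 : Tendsto g (𝓝[Icc (0:ℝ) r₀] 0) (𝓝 (g 0)) := hgc 0 h0mem
    have h2 : 𝓝[>] (0:ℝ) = 𝓝[Ioc (0:ℝ) r₀] 0 := (nhdsWithin_Ioc_eq_nhdsGT hr₀).symm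
    rw [h2]
    exact h1.mono_left (nhdsWithin_mono 0 Ioc_subset_Icc_self)
  have ha₁ : g₁ 0 = a := by
    refine tendsto_nhds_unique (hglim g₁ hg₁c) (d₁.congr' ?_)
    filter_upwards [hIooev] with r hr
    exact (heq₁ r hr).symm
  have ha₂ : g₂ 0 = a := by
    refine tendsto_nhds_unique (hglim g₂ hg₂c) (d₂.congr' ?_)
    filter_upwards [hIooev] with r hr
    exact (heq₂ r hr).symm
  clear_value g₁ g₂
  -- bound B
  obtain ⟨z₀, hz₀, hz₀max⟩ := isCompact_Icc.exists_isMaxOn (nonempty_Icc.2 hr₀.le)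
    ((hg₁c.abs).add (hg₂c.abs))
  set B : ℝ := max 1 (|g₁ z₀| + |g₂ z₀|) with hBdef
  have hB1 : (1:ℝ) ≤ B := le_max_left _ _
  have hB0 : (0:ℝ) < B := lt_of_lt_of_le one_pos hB1
  have hgb₁ : ∀ s ∈ Icc (0:ℝ) r₀, |g₁ s| ≤ B := by
    intro s hs
    have h' : |g₁ s| + |g₂ s| ≤ |g₁ z₀| + |g₂ z₀| := hz₀max hs
    exact le_trans (by linarith [abs_nonneg (g₂ s)]) (le_max_right 1 _)
  have hgb₂ : ∀ s ∈ Icc (0:ℝ) r₀, |g₂ s| ≤ B := by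
    intro s hs
    have h' : |g₁ s| + |g₂ s| ≤ |g₁ z₀| + |g₂ z₀| := hz₀max hs
    exact le_trans (by linarith [abs_nonneg (g₁ s)]) (le_max_right 1 _)
  clear_value B
  -- |w_i s| ≤ B * s
  have hwb₁ : ∀ s ∈ Icc (0:ℝ) r₀, |w₁ s| ≤ B * s := by
    intro s hs
    have := norm_image_sub_le_of_norm_deriv_le_segment' hd₁
      (fun x hx => hgb₁ x (Ico_subset_Icc_self hx)) s hs
    simpa [init₁] using this
  have hwb₂ : ∀ s ∈ Icc (0:ℝ) r₀, |w₂ s| ≤ B * s := by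
    intro s hs
    have := norm_image_sub_le_of_norm_deriv_le_segment' hd₂
      (fun x hx => hgb₂ x (Ico_subset_Icc_self hx)) s hs
    simpa [init₂] using this
  -- constants
  set K : ℝ := 5*B^2 + (9*B^2+5*B^4)/2 with hKdef
  have hB2 : (1:ℝ) ≤ B^2 := by nlinarith
  have hB4 : (0:ℝ) ≤ B^4 := by positivity
  have hK1 : (1:ℝ) ≤ K := by rw [hKdef]; linarith
  have hK0 : (0:ℝ) < K := lt_of_lt_of_le one_pos hK1
  clear_value K
  set δ : ℝ := min (r₀/2) (min 1 (1/(8*K))) with hδdef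
  have hδ0 : 0 < δ := by
    apply lt_min (by linarith)
    exact lt_min one_pos (by positivity)
  have hδr : δ < r₀ := lt_of_le_of_lt (min_le_left _ _) (by linarith)
  have hδ1 : δ ≤ 1 := le_trans (min_le_right _ _) (min_le_left _ _)
  have hδK : δ ≤ 1/(8*K) := le_trans (min_le_right _ _) (min_le_right _ _)
  have hsubδ : Icc (0:ℝ) δ ⊆ Icc (0:ℝ) r₀ := Icc_subset_Icc le_rfl hδr.le
  clear_value δ
  -- max point of ψ
  set ψ : ℝ → ℝ := fun s => g₁ s - g₂ s with hψdef
  have hψc : ContinuousOn (fun s => |ψ s|) (Icc 0 δ) := ((hg₁c.sub hg₂c).mono hsubδ).abs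
  obtain ⟨x₀, hx₀mem, hx₀max⟩ := isCompact_Icc.exists_isMaxOn (nonempty_Icc.2 hδ0.le) hψc
  set M : ℝ := |ψ x₀| with hMdef
  clear_value M
  have hM0 : 0 ≤ M := hMdef ▸ abs_nonneg _
  have hMb : ∀ s ∈ Icc (0:ℝ) δ, |ψ s| ≤ M := by
    intro s hs
    have h' : |ψ s| ≤ |ψ x₀| := hx₀max hs
    rw [hMdef]; exact h'
  -- φ and its bound
  set φ : ℝ → ℝ := fun s => w₁ s - w₂ s with hφdef
  have hφd : ∀ r ∈ Icc (0:ℝ) r₀, HasDerivWithinAt φ (ψ r) (Icc 0 r₀) r :=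
    fun r hr => (hd₁ r hr).sub (hd₂ r hr)
  have hφ0 : φ 0 = 0 := by simp [hφdef, init₁, init₂]
  have hφb : ∀ s ∈ Icc (0:ℝ) δ, |φ s| ≤ M * s := by
    intro s hs
    have := norm_image_sub_le_of_norm_deriv_le_segment'
      (f' := ψ) (fun x hx => ((hφd x (hsubδ hx)).mono hsubδ))
      (fun x hx => hMb x (Ico_subset_Icc_self hx)) s hs
    simpa [hφ0] using this
  -- q and its derivative
  set q : ℝ → ℝ := fun s => w₁ s / s + deriv w₁ s - (w₂ s / s + deriv w₂ s) with hqdef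
  set G : ℝ → ℝ := fun s =>
    5 * w₁ s / (2 * (1 + (w₁ s) ^ 2)) * (deriv w₁ s) ^ 2
      + (w₁ s) ^ 3 / (2 * s ^ 2) * (3 + (w₁ s) ^ 2)
      - (5 * w₂ s / (2 * (1 + (w₂ s) ^ 2)) * (deriv w₂ s) ^ 2
      + (w₂ s) ^ 3 / (2 * s ^ 2) * (3 + (w₂ s) ^ 2)) with hGdef
  have hdd₁ : ∀ r ∈ Ioo (0:ℝ) r₀, DifferentiableAt ℝ (deriv w₁) r := by
    intro r hr
    have hC : ContDiffOn ℝ 1 (deriv w₁) (Ioo 0 r₀) :=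
      (h₁.mono Ioo_subset_Icc_self).deriv_of_isOpen isOpen_Ioo (by norm_num)
    exact ((hC.differentiableOn one_ne_zero) r hr).differentiableAt (isOpen_Ioo.mem_nhds hr)
  have hdd₂ : ∀ r ∈ Ioo (0:ℝ) r₀, DifferentiableAt ℝ (deriv w₂) r := by
    intro r hr
    have hC : ContDiffOn ℝ 1 (deriv w₂) (Ioo 0 r₀) :=
      (h₂.mono Ioo_subset_Icc_self).deriv_of_isOpen isOpen_Ioo (by norm_num)
    exact ((hC.differentiableOn one_ne_zero) r hr).differentiableAt (isOpen_Ioo.mem_nhds hr)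
  have hwda₁ : ∀ r ∈ Ioo (0:ℝ) r₀, DifferentiableAt ℝ w₁ r := fun r hr =>
    ((h₁.differentiableOn (by norm_num)) r (Ioo_subset_Icc_self hr)).differentiableAt (hmem r hr)
  have hwda₂ : ∀ r ∈ Ioo (0:ℝ) r₀, DifferentiableAt ℝ w₂ r := fun r hr =>
    ((h₂.differentiableOn (by norm_num)) r (Ioo_subset_Icc_self hr)).differentiableAt (hmem r hr)
  have hqd : ∀ r ∈ Ioo (0:ℝ) r₀, HasDerivAt q (G r) r := by
    intro r hr
    have hne : r ≠ 0 := ne_of_gt hr.1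
    have hq1 : DifferentiableAt ℝ (fun t => w₁ t / t) r :=
      (hwda₁ r hr).div differentiableAt_id hne
    have hq2 : DifferentiableAt ℝ (fun t => w₂ t / t) r :=
      (hwda₂ r hr).div differentiableAt_id hne
    have H : HasDerivAt q
        ((deriv (fun t => w₁ t / t) r + deriv (deriv w₁) r)
          - (deriv (fun t => w₂ t / t) r + deriv (deriv w₂) r)) r := by
      exact ((hq1.hasDerivAt.add (hdd₁ r hr).hasDerivAt).sub
        (hq2.hasDerivAt.add (hdd₂ r hr).hasDerivAt))
    have e : (deriv (fun t => w₁ t / t) r + deriv (deriv w₁) r)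
          - (deriv (fun t => w₂ t / t) r + deriv (deriv w₂) r) = G r := by
      have e₁ := ode₁ r hr
      have e₂ := ode₂ r hr
      simp only [hGdef]
      linarith
    rwa [e] at H
  -- limit of q at 0
  have hslope : ∀ (w g : ℝ → ℝ), w 0 = 0 → (∀ r ∈ Icc (0:ℝ) r₀, HasDerivWithinAt w
        (g r) (Icc 0 r₀) r) → g 0 = a →
      Tendsto (fun s => w s / s) (𝓝[>] (0:ℝ)) (𝓝 a) := by
    intro w g hw0 hwd hwa
    have h0 : HasDerivWithinAt w a (Icc 0 r₀) 0 := hwa ▸ hwd 0 h0mem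
    rw [hasDerivWithinAt_iff_tendsto_slope] at h0
    have hset : Icc (0:ℝ) r₀ \ {0} = Ioc 0 r₀ := Icc_diff_left
    rw [hset, nhdsWithin_Ioc_eq_nhdsGT hr₀] at h0
    refine h0.congr' ?_
    filter_upwards [self_mem_nhdsWithin] with s hs
    have : s ≠ 0 := ne_of_gt hs
    simp [slope_def_field, hw0]
  have hs₁ : Tendsto (fun s => w₁ s / s) (𝓝[>] (0:ℝ)) (𝓝 a) := hslope w₁ g₁ init₁ hd₁ ha₁
  have hs₂ : Tendsto (fun s => w₂ s / s) (𝓝[>] (0:ℝ)) (𝓝 a) := hslope w₂ g₂ init₂ hd₂ ha₂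
  have hqlim : Tendsto q (𝓝[>] (0:ℝ)) (𝓝 0) := by
    have : Tendsto q (𝓝[>] (0:ℝ)) (𝓝 ((a + a) - (a + a))) :=
      (hs₁.add d₁).sub (hs₂.add d₂)
    simpa using this
  -- pointwise bound on G
  have hGb : ∀ s ∈ Ioc (0:ℝ) δ, |G s| ≤ 2*K*M := by
    intro s hs
    have hsIoo : s ∈ Ioo (0:ℝ) r₀ := ⟨hs.1, lt_of_le_of_lt hs.2 hδr⟩
    have hsIcc : s ∈ Icc (0:ℝ) r₀ := Ioo_subset_Icc_self hsIoo
    have hp : |deriv w₁ s| ≤ B := (heq₁ s hsIoo) ▸ hgb₁ s hsIcc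
    have hq' : |deriv w₂ s| ≤ B := (heq₂ s hsIoo) ▸ hgb₂ s hsIcc
    have hx : |w₁ s| ≤ B * s := hwb₁ s hsIcc
    have hy : |w₂ s| ≤ B * s := hwb₂ s hsIcc
    have hs1 : s ≤ 1 := le_trans hs.2 hδ1
    have := keyboundp B (w₁ s) (w₂ s) (deriv w₁ s) (deriv w₂ s) s hB1 hs.1 hs1 hx hy hp hq'
    have hφs : |w₁ s - w₂ s| ≤ M := by
      have h' := hφb s ⟨hs.1.le, hs.2⟩
      have : M * s ≤ M * 1 := mul_le_mul_of_nonneg_left hs1 hM0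
      simp only [hφdef] at h'
      linarith
    have hψs : |deriv w₁ s - deriv w₂ s| ≤ M := by
      have h' := hMb s ⟨hs.1.le, hs.2⟩
      simp only [hψdef] at h'
      rwa [heq₁ s hsIoo, heq₂ s hsIoo] at h'
    have hG1 : |G s| ≤ K * (|w₁ s - w₂ s| + |deriv w₁ s - deriv w₂ s|) := by
      rw [hKdef]
      simpa only [hGdef] using this
    have hG2 : K * (|w₁ s - w₂ s| + |deriv w₁ s - deriv w₂ s|) ≤ K * (M + M) := by
      apply mul_le_mul_of_nonneg_left _ hK0.le
      linarith
    have hG3 : K * (M + M) = 2*K*M := by ring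
    linarith
  -- estimate on q
  have hqest : ∀ r ∈ Ioc (0:ℝ) δ, |q r| ≤ 2*K*M*r := by
    intro r hr
    have key : ∀ s ∈ Ioo (0:ℝ) r, |q r - q s| ≤ 2*K*M*(r - s) := by
      intro s hsr
      have hsub : Icc s r ⊆ Ioo (0:ℝ) r₀ := fun x hx =>
        ⟨lt_of_lt_of_le hsr.1 hx.1, lt_of_le_of_lt (le_trans hx.2 hr.2) hδr⟩
      have hcont : ContinuousOn q (Icc s r) := fun x hx =>
        ((hqd x (hsub hx)).continuousAt).continuousWithinAt
      have hder : ∀ x ∈ Icc s r, HasDerivWithinAt q (G x) (Icc s r) x := fun x hx =>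
        (hqd x (hsub hx)).hasDerivWithinAt
      have hbound : ∀ x ∈ Ico s r, |G x| ≤ 2*K*M := fun x hx =>
        hGb x ⟨lt_of_lt_of_le hsr.1 hx.1, le_trans hx.2.le hr.2⟩
      have := norm_image_sub_le_of_norm_deriv_le_segment' hder hbound r ⟨hsr.2.le, le_rfl⟩
      simpa [abs_sub_comm] using this
    have hlim : Tendsto (fun s => |q r - q s|) (𝓝[>] (0:ℝ)) (𝓝 |q r - 0|) :=
      ((tendsto_const_nhds.sub hqlim).abs)
    have hev : ∀ᶠ s in 𝓝[>] (0:ℝ), |q r - q s| ≤ 2*K*M*r := by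
      filter_upwards [Ioo_mem_nhdsGT hr.1]
        with s hs
      calc |q r - q s| ≤ 2*K*M*(r - s) := key s hs
      _ ≤ 2*K*M*r := by
          apply mul_le_mul_of_nonneg_left (by linarith [hs.1]) (by positivity)
    have := le_of_tendsto hlim hev
    simpa using this
  -- estimate on φ via u = s φ(s)
  have hφest : ∀ r ∈ Ioc (0:ℝ) δ, |φ r| ≤ 2*K*M*r^2 := by
    intro r hr
    set u : ℝ → ℝ := fun s => s * φ s with hudef
    set F : ℝ → ℝ := fun s => φ s + s * ψ s with hFdef
    have hrIcc : Icc (0:ℝ) r ⊆ Icc (0:ℝ) r₀ := Icc_subset_Icc le_rfl (le_trans hr.2 hδr.le)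
    have hud : ∀ x ∈ Icc (0:ℝ) r, HasDerivWithinAt u (F x) (Icc 0 r) x := by
      intro x hx
      have hφx : HasDerivWithinAt φ (ψ x) (Icc 0 r) x := (hφd x (hrIcc hx)).mono hrIcc
      have : HasDerivWithinAt (fun s => s * φ s) (1 * φ x + x * ψ x) (Icc 0 r) x :=
        (hasDerivWithinAt_id x (Icc (0:ℝ) r)).mul hφx
      simpa [hFdef, hudef, mul_comm, add_comm] using this
    have hFb : ∀ x ∈ Ico (0:ℝ) r, |F x| ≤ 2*K*M*r^2 := by
      intro x hx
      rcases eq_or_lt_of_le hx.1 with h0 | h0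
      · simp [hFdef, ← h0, hφ0]
        positivity
      · have hxIoc : x ∈ Ioc (0:ℝ) δ := ⟨h0, le_trans hx.2.le hr.2⟩
        have hxIoo : x ∈ Ioo (0:ℝ) r₀ := ⟨h0, lt_of_le_of_lt hxIoc.2 hδr⟩
        have hFq : F x = x * q x := by
          simp only [hFdef, hqdef, hφdef, hψdef, heq₁ x hxIoo, heq₂ x hxIoo]
          field_simp
          ring
        rw [hFq, abs_mul, abs_of_pos h0]
        calc x * |q x| ≤ x * (2*K*M*x) := by
              apply mul_le_mul_of_nonneg_left (hqest x hxIoc) h0.le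
        _ = 2*K*M*(x*x) := by ring
        _ ≤ 2*K*M*(r*r) := by
              apply mul_le_mul_of_nonneg_left
                (mul_le_mul hx.2.le hx.2.le h0.le (le_trans h0.le hx.2.le)) (by positivity)
        _ = 2*K*M*r^2 := by ring
    have := norm_image_sub_le_of_norm_deriv_le_segment' hud hFb r ⟨hr.1.le, le_rfl⟩
    have hu0 : u 0 = 0 := by simp [hudef]
    have hur : |u r| ≤ 2*K*M*r^2 * r := by simpa [hu0] using this
    have : |u r| = r * |φ r| := by
      rw [hudef]; simp [abs_mul, abs_of_pos hr.1]
    rw [this] at hur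
    have h3 : 2*K*M*r^2*r = r * (2*K*M*r^2) := by ring
    rw [h3] at hur
    exact le_of_mul_le_mul_left hur hr.1
  -- estimate on ψ
  have hψest : ∀ r ∈ Ioc (0:ℝ) δ, |ψ r| ≤ 4*K*M*δ := by
    intro r hr
    have hrIoo : r ∈ Ioo (0:ℝ) r₀ := ⟨hr.1, lt_of_le_of_lt hr.2 hδr⟩
    have hψq : ψ r = q r - φ r / r := by
      show g₁ r - g₂ r = w₁ r / r + deriv w₁ r - (w₂ r / r + deriv w₂ r) - (w₁ r - w₂ r) / r
      rw [heq₁ r hrIoo, heq₂ r hrIoo, sub_div]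
      ring
    rw [hψq]
    have h1 : |q r - φ r / r| ≤ |q r| + |φ r / r| := by
      have h1' := abs_add_le (q r) (-(φ r / r))
      simpa [sub_eq_add_neg, abs_neg] using h1'
    have h2 : |φ r / r| ≤ 2*K*M*r := by
      rw [abs_div, abs_of_pos hr.1, div_le_iff₀ hr.1]
      calc |φ r| ≤ 2*K*M*r^2 := hφest r hr
      _ = 2*K*M*r*r := by ring
    have h3 : |q r| ≤ 2*K*M*r := hqest r hr
    have h4 : 2*K*M*r ≤ 2*K*M*δ := by
      apply mul_le_mul_of_nonneg_left hr.2 (by positivity)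
    linarith
  -- M = 0
  have hMzero : M = 0 := by
    rcases eq_or_lt_of_le hx₀mem.1 with h0 | h0
    · have hψ0 : ψ 0 = 0 := by show g₁ 0 - g₂ 0 = 0; rw [ha₁, ha₂]; ring
      rw [hMdef, ← h0, hψ0, abs_zero]
    · have := hψest x₀ ⟨h0, hx₀mem.2⟩
      have hKδ : 4*K*δ ≤ 1/2 := by
        have h8 : 8*K*δ ≤ 1 := by
          have h8' := mul_le_mul_of_nonneg_left hδK (by positivity : (0:ℝ) ≤ 8*K)
          have h8'' : 8*K*(1/(8*K)) = 1 := by field_simp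
          linarith
        linarith
      have h5 : M ≤ 4*K*δ*M := by
        calc M = |ψ x₀| := hMdef
        _ ≤ 4*K*M*δ := this
        _ = 4*K*δ*M := by ring
      nlinarith [mul_le_mul_of_nonneg_right hKδ hM0]
  -- conclude
  refine ⟨δ, hδ0, hδr.le, ?_⟩
  intro s hs
  have := hφb s hs
  rw [hMzero, zero_mul] at this
  have : φ s = 0 := abs_eq_zero.1 (le_antisymm this (abs_nonneg _))
  simpa [hφdef, sub_eq_zero] using this
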